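/- Let A ∈ ℝ^{n×n}, B ∈ ℝ^{n×p}, let Q ∈ ℝ^{n×n} be symmetric positive definite, and let P ∈ ℝ^{n×n} be symmetric such that Bᵀ P B is invertible and P = Aᵀ P A - Aᵀ P B (Bᵀ P B)⁻¹ Bᵀ P A + Q. Set K₀ = -(Bᵀ P B)⁻¹ Bᵀ P A and θ = σ_max( Q^{-1/2}·K₀ᵀ Bᵀ P B K₀·Q^{-1/2} ). Then for every complex number μ with |μ - 1|²·θ < 1, regarding all matrices as complex matrices, (A + μ·B K₀)^H P (A + μ·B K₀) - P is negative definite; in particular, if additionally P is positive definite, then A + μ·B K₀ is Schur stable. -/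

import Mathlib

open Matrix
open scoped ComplexOrder Matrix.Norms.L2Operator

noncomputable section

/-- The positive semidefinite square root of a positive semidefinite matrix
(Mathlib's former `Matrix.PosSemidef.sqrt`, removed since; restored with its old definition). -/
def Matrix.PosSemidef.sqrt {n 𝕜 : Type*} [Fintype n] [DecidableEq n] [RCLike 𝕜]
    {A : Matrix n n 𝕜} (hA : A.PosSemidef) : Matrix n n 𝕜 :=
  hA.1.eigenvectorUnitary.1 * diagonal ((↑) ∘ (√·) ∘ hA.1.eigenvalues) *
  (star hA.1.eigenvectorUnitary : Matrix n n 𝕜)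

/-- A complex square matrix is Schur stable if every eigenvalue has modulus `< 1`. -/
def SchurStable {m : Type*} [Fintype m] [DecidableEq m] (M : Matrix m m ℂ) : Prop :=
  ∀ μ ∈ spectrum ℂ M, ‖μ‖ < 1

/-- Map a real matrix to a complex one, entrywise. -/
def matC {a b : Type*} (M : Matrix a b ℝ) : Matrix a b ℂ := M.map Complex.ofReal

lemma matC_mul {a b c : Type*} [Fintype b] (M : Matrix a b ℝ) (N : Matrix b c ℝ) :
    matC (M * N) = matC M * matC N := Matrix.map_mul (f := Complex.ofRealHom)

lemma matC_add {a b : Type*} (M N : Matrix a b ℝ) : matC (M + N) = matC M + matC N :=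
  Matrix.map_add _ (by simp) M N

lemma matC_sub {a b : Type*} (M N : Matrix a b ℝ) : matC (M - N) = matC M - matC N :=
  Matrix.map_sub _ (by simp) M N

lemma matC_neg {a b : Type*} (M : Matrix a b ℝ) : matC (-M) = -matC M := by
  ext i j; simp [matC]

lemma matC_smul {a b : Type*} (c : ℝ) (M : Matrix a b ℝ) :
    matC (c • M) = (c : ℂ) • matC M := by
  ext i j; simp [matC]

lemma matC_conjTranspose {a b : Type*} (M : Matrix a b ℝ) : (matC M)ᴴ = matC Mᵀ := by
  ext i j; simp [matC, conjTranspose_apply]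

lemma matC_posDef {n : Type*} [Fintype n] [DecidableEq n] {M : Matrix n n ℝ}
    (hM : M.PosDef) : (matC M).PosDef := by
  have hsym : Mᵀ = M := hM.1
  rw [posDef_iff_dotProduct_mulVec]
  constructor
  · rw [Matrix.IsHermitian, matC_conjTranspose, hsym]
  · intro x hx
    set a : n → ℝ := fun i => (x i).re with ha
    set b : n → ℝ := fun i => (x i).im with hb
    have hxab : ∀ i, x i = Complex.mk (a i) (b i) := fun i => rfl
    have expand : star x ⬝ᵥ matC M *ᵥ x =
        ∑ i, ∑ j, (starRingEnd ℂ) (x i) * (M i j : ℂ) * x j := by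
      simp [dotProduct, mulVec, Finset.mul_sum, mul_assoc, matC]
    have hre : (star x ⬝ᵥ matC M *ᵥ x).re = a ⬝ᵥ M *ᵥ a + b ⬝ᵥ M *ᵥ b := by
      rw [expand]
      simp only [Complex.re_sum, dotProduct, mulVec, Finset.mul_sum]
      rw [← Finset.sum_add_distrib]
      refine Finset.sum_congr rfl fun i _ => ?_
      rw [← Finset.sum_add_distrib]
      refine Finset.sum_congr rfl fun j _ => ?_
      simp only [Complex.mul_re, Complex.mul_im, Complex.conj_re, Complex.conj_im,
        Complex.ofReal_re, Complex.ofReal_im, ha, hb]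
      ring
    have him : (star x ⬝ᵥ matC M *ᵥ x).im = 0 := by
      rw [expand]
      have h2 : (2:ℝ) * (∑ i, ∑ j, ((starRingEnd ℂ) (x i) * (M i j : ℂ) * x j)).im = 0 := by
        have hims : (∑ i, ∑ j, ((starRingEnd ℂ) (x i) * (M i j : ℂ) * x j)).im
            = ∑ i, ∑ j, ((starRingEnd ℂ) (x i) * (M i j : ℂ) * x j).im := by
          rw [Complex.im_sum]
          exact Finset.sum_congr rfl fun i _ => Complex.im_sum _ _
        rw [hims, two_mul]
        nth_rewrite 2 [Finset.sum_comm]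
        rw [← Finset.sum_add_distrib]
        refine Finset.sum_eq_zero fun i _ => ?_
        rw [← Finset.sum_add_distrib]
        refine Finset.sum_eq_zero fun j _ => ?_
        have hMij : M j i = M i j := by conv_lhs => rw [← hsym, Matrix.transpose_apply]
        simp only [Complex.mul_re, Complex.mul_im, Complex.conj_re, Complex.conj_im,
          Complex.ofReal_re, Complex.ofReal_im, hMij]
        ring
      linarith
    have hpos : 0 < a ⬝ᵥ M *ᵥ a + b ⬝ᵥ M *ᵥ b := by
      have hab : a ≠ 0 ∨ b ≠ 0 := by
        by_contra h
        push_neg at h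
        apply hx
        ext i
        have h1 := congrFun h.1 i
        have h2 := congrFun h.2 i
        simp only [ha, hb, Pi.zero_apply] at h1 h2
        apply Complex.ext <;> simpa
      have haa : 0 ≤ a ⬝ᵥ M *ᵥ a := by
        have := hM.posSemidef.dotProduct_mulVec_nonneg a; simpa using this
      have hbb : 0 ≤ b ⬝ᵥ M *ᵥ b := by
        have := hM.posSemidef.dotProduct_mulVec_nonneg b; simpa using this
      rcases hab with h | h
      · have := hM.dotProduct_mulVec_pos h; simp only [star_trivial] at this; linarith
      · have := hM.dotProduct_mulVec_pos h; simp only [star_trivial] at this; linarith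
    rw [Complex.lt_def]
    refine ⟨by rw [hre] at *; simpa using hpos, by simp [him]⟩

lemma posSemidef_sqrt_mul_self {n : ℕ} {Q : Matrix (Fin n) (Fin n) ℝ} (hQ : Q.PosSemidef) :
    hQ.sqrt * hQ.sqrt = Q := by
  have hs := hQ.1.spectral_theorem
  rw [Unitary.conjStarAlgAut_apply] at hs
  have hU : (star hQ.1.eigenvectorUnitary : Matrix (Fin n) (Fin n) ℝ) *
      (hQ.1.eigenvectorUnitary : Matrix (Fin n) (Fin n) ℝ) = 1 :=
    Unitary.coe_star_mul_self _
  unfold Matrix.PosSemidef.sqrt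
  conv_rhs => rw [hs]
  calc _ = (hQ.1.eigenvectorUnitary : Matrix (Fin n) (Fin n) ℝ) *
        (diagonal ((↑) ∘ (√·) ∘ hQ.1.eigenvalues) *
        ((star hQ.1.eigenvectorUnitary : Matrix (Fin n) (Fin n) ℝ) *
        (hQ.1.eigenvectorUnitary : Matrix (Fin n) (Fin n) ℝ)) *
        diagonal ((↑) ∘ (√·) ∘ hQ.1.eigenvalues)) *
        (star hQ.1.eigenvectorUnitary : Matrix (Fin n) (Fin n) ℝ) := by
          simp only [Matrix.mul_assoc]; rfl
    _ = _ := by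
      rw [hU, Matrix.mul_one, diagonal_mul_diagonal]
      congr 2
      simp [diagonal_apply, Real.mul_self_sqrt, hQ.eigenvalues_nonneg]

lemma posSemidef_sqrt_isHermitian {n : ℕ} {Q : Matrix (Fin n) (Fin n) ℝ} (hQ : Q.PosSemidef) :
    hQ.sqrt.IsHermitian := by
  unfold Matrix.PosSemidef.sqrt Matrix.IsHermitian
  rw [conjTranspose_mul, conjTranspose_mul, star_eq_conjTranspose, conjTranspose_conjTranspose,
    diagonal_conjTranspose, Matrix.mul_assoc]
  congr 2

lemma sub_smul_posDef {n : ℕ} {Q R : Matrix (Fin n) (Fin n) ℝ} (hQ : Q.PosDef)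
    (hR : Rᵀ = R) {c θ : ℝ} (hc : 0 ≤ c)
    (hth : θ = ‖hQ.posSemidef.sqrt⁻¹ * R * hQ.posSemidef.sqrt⁻¹‖)
    (hcθ : c * θ < 1) : (Q - c • R).PosDef := by
  set T := hQ.posSemidef.sqrt with hT
  have hTT : T * T = Q := posSemidef_sqrt_mul_self hQ.posSemidef
  have hTsym : Tᵀ = T := by
    have := posSemidef_sqrt_isHermitian hQ.posSemidef
    rwa [Matrix.IsHermitian, conjTranspose_eq_transpose_of_trivial] at this
  have hQsym : Qᵀ = Q := by
    have := hQ.1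
    rwa [Matrix.IsHermitian, conjTranspose_eq_transpose_of_trivial] at this
  have hdet : IsUnit T.det := by
    have h1 : T.det * T.det = Q.det := by rw [← det_mul, hTT]
    have h2 : 0 < Q.det := hQ.det_pos
    refine isUnit_iff_ne_zero.mpr fun h => ?_
    rw [h, mul_zero] at h1
    exact absurd h1.symm (ne_of_gt h2)
  have hTi : T * T⁻¹ = 1 := mul_nonsing_inv _ hdet
  have hiT : T⁻¹ * T = 1 := nonsing_inv_mul _ hdet
  set S := T⁻¹ * R * T⁻¹ with hS
  have hRS : R = T * S * T := by
    rw [hS]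
    calc R = (T * T⁻¹) * R * (T⁻¹ * T) := by rw [hTi, hiT, Matrix.one_mul, Matrix.mul_one]
    _ = T * (T⁻¹ * R * T⁻¹) * T := by simp only [Matrix.mul_assoc]
  rw [posDef_iff_dotProduct_mulVec]
  constructor
  · rw [Matrix.IsHermitian, conjTranspose_eq_transpose_of_trivial, transpose_sub,
      transpose_smul, hR, hQsym]
  · intro x hx
    set y := T *ᵥ x with hy
    have hvm : x ᵥ* T = T *ᵥ x := by
      conv_lhs => rw [← hTsym]
      rw [vecMul_transpose]
    have hQx : x ⬝ᵥ Q *ᵥ x = y ⬝ᵥ y := by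
      rw [← hTT, ← mulVec_mulVec, dotProduct_mulVec, hvm]
    have hRx : x ⬝ᵥ R *ᵥ x = y ⬝ᵥ S *ᵥ y := by
      rw [hRS]
      have : (T * S * T) *ᵥ x = T *ᵥ (S *ᵥ y) := by rw [hy, mulVec_mulVec, mulVec_mulVec]
      rw [this, dotProduct_mulVec, hvm]
    have hy0 : y ≠ 0 := by
      intro h
      have := hQ.dotProduct_mulVec_pos hx
      rw [star_trivial, hQx, h] at this
      simp at this
    set Y : EuclideanSpace ℝ (Fin n) := (WithLp.equiv 2 _).symm y with hY
    have hY0 : Y ≠ 0 := by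
      intro h; apply hy0; rw [hY] at h
      exact (WithLp.equiv 2 _).symm.injective (h.trans (by simp))
    have hYnorm : y ⬝ᵥ y = ‖Y‖ ^ 2 := by
      rw [← real_inner_self_eq_norm_sq]; rfl
    have hbound : y ⬝ᵥ S *ᵥ y ≤ θ * ‖Y‖ ^ 2 := by
      set Z : EuclideanSpace ℝ (Fin n) := (WithLp.equiv 2 _).symm (S *ᵥ y) with hZ
      have h1 : y ⬝ᵥ S *ᵥ y = (inner ℝ Y Z) := by
        rw [dotProduct_comm]; rfl
      have h2 : (inner ℝ Y Z) ≤ ‖Y‖ * ‖Z‖ := real_inner_le_norm _ _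
      have h3 : ‖Z‖ ≤ ‖S‖ * ‖Y‖ := S.l2_opNorm_mulVec Y
      have hθS : θ = ‖S‖ := hth
      have hYn : 0 ≤ ‖Y‖ := norm_nonneg _
      nlinarith [h1, h2, h3]
    have hval : x ⬝ᵥ (Q - c • R) *ᵥ x = y ⬝ᵥ y - c * (y ⬝ᵥ S *ᵥ y) := by
      rw [sub_mulVec, dotProduct_sub, hQx, smul_mulVec, dotProduct_smul, hRx]
      rfl
    rw [star_trivial, hval, hYnorm]
    have hYpos : 0 < ‖Y‖ ^ 2 := by
      have : ‖Y‖ ≠ 0 := norm_ne_zero_iff.mpr hY0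
      positivity
    have hSy : c * (y ⬝ᵥ S *ᵥ y) ≤ c * (θ * ‖Y‖ ^ 2) := by
      exact mul_le_mul_of_nonneg_left hbound hc
    nlinarith

/-- Riccati-based consensus region used in Theorem 5: with
`θ = σ_max(Q^{-1/2} K₀ᵀ Bᵀ P B K₀ Q^{-1/2})`, every `μ` in the disc `|μ-1|² θ < 1` yields a
Lyapunov decrease for `A + μ B K₀` with certificate `P`; `σ_max` is realized as the L2
operator norm and `Q^{-1/2}` as the inverse of the PSD square root of `Q`. -/
theorem riccati_consensus_region_disc {n p : ℕ}
    (A : Matrix (Fin n) (Fin n) ℝ) (B : Matrix (Fin n) (Fin p) ℝ)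
    (Q : Matrix (Fin n) (Fin n) ℝ) (hQ : Q.PosDef)
    (P : Matrix (Fin n) (Fin n) ℝ) (hPsymm : P.IsSymm)
    (hBPB : IsUnit (Bᵀ * P * B))
    (hric : P = Aᵀ * P * A - Aᵀ * P * B * (Bᵀ * P * B)⁻¹ * Bᵀ * P * A + Q)
    (K₀ : Matrix (Fin p) (Fin n) ℝ) (hK₀ : K₀ = -((Bᵀ * P * B)⁻¹ * Bᵀ * P * A))
    (θ : ℝ)
    (hθ : θ = ‖hQ.posSemidef.sqrt⁻¹ * (K₀ᵀ * Bᵀ * P * B * K₀) * hQ.posSemidef.sqrt⁻¹‖) :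
    ∀ μ : ℂ, Complex.normSq (μ - 1) * θ < 1 →
      (matC P - (matC A + μ • matC (B * K₀))ᴴ * matC P * (matC A + μ • matC (B * K₀))).PosDef
      ∧ (P.PosDef → SchurStable (matC A + μ • matC (B * K₀))) := by
  intro μ hμ
  have hc0 : 0 ≤ Complex.normSq (μ - 1) := Complex.normSq_nonneg _
  have hPt : Pᵀ = P := hPsymm
  have hGdet : IsUnit (Bᵀ * P * B).det := (isUnit_iff_isUnit_det _).mp hBPB
  have hRsym : (K₀ᵀ * Bᵀ * P * B * K₀)ᵀ = K₀ᵀ * Bᵀ * P * B * K₀ := by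
    simp only [transpose_mul, transpose_transpose, hPt, Matrix.mul_assoc]
  have hBPA : Bᵀ * P * A = -(Bᵀ * P * B * K₀) := by
    rw [hK₀, Matrix.mul_neg, neg_neg]
    calc Bᵀ * P * A = Bᵀ * P * B * ((Bᵀ * P * B)⁻¹ * (Bᵀ * P * A)) :=
      (Matrix.mul_nonsing_inv_cancel_left _ _ hGdet).symm
    _ = Bᵀ * P * B * ((Bᵀ * P * B)⁻¹ * Bᵀ * P * A) := by simp only [Matrix.mul_assoc]
  have hAPB : Aᵀ * (P * B) = -(K₀ᵀ * (Bᵀ * (P * B))) := by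
    have h := congrArg Matrix.transpose hBPA
    simpa only [transpose_neg, transpose_mul, transpose_transpose, hPt,
      Matrix.mul_assoc] using h
  have F2 : Aᵀ * P * (B * K₀) = -(K₀ᵀ * Bᵀ * P * B * K₀) := by
    calc Aᵀ * P * (B * K₀) = (Aᵀ * (P * B)) * K₀ := by simp only [Matrix.mul_assoc]
    _ = -(K₀ᵀ * (Bᵀ * (P * B))) * K₀ := by rw [hAPB]
    _ = -(K₀ᵀ * Bᵀ * P * B * K₀) := by simp only [Matrix.neg_mul, Matrix.mul_assoc]
  have F3 : (B * K₀)ᵀ * P * A = -(K₀ᵀ * Bᵀ * P * B * K₀) := by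
    calc (B * K₀)ᵀ * P * A = K₀ᵀ * (Bᵀ * P * A) := by simp only [transpose_mul, Matrix.mul_assoc]
    _ = K₀ᵀ * (-(Bᵀ * P * B * K₀)) := by rw [hBPA]
    _ = -(K₀ᵀ * Bᵀ * P * B * K₀) := by simp only [Matrix.mul_neg, Matrix.mul_assoc]
  have F4 : (B * K₀)ᵀ * P * (B * K₀) = K₀ᵀ * Bᵀ * P * B * K₀ := by
    simp only [transpose_mul, Matrix.mul_assoc]
  have hmid : Aᵀ * P * B * (Bᵀ * P * B)⁻¹ * Bᵀ * P * A = K₀ᵀ * Bᵀ * P * B * K₀ := by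
    calc Aᵀ * P * B * (Bᵀ * P * B)⁻¹ * Bᵀ * P * A
        = (Aᵀ * (P * B)) * ((Bᵀ * P * B)⁻¹ * (Bᵀ * P * A)) := by simp only [Matrix.mul_assoc]
    _ = (-(K₀ᵀ * (Bᵀ * (P * B)))) * ((Bᵀ * P * B)⁻¹ * (-(Bᵀ * P * B * K₀))) := by
        rw [hAPB, hBPA]
    _ = (K₀ᵀ * (Bᵀ * (P * B))) * ((Bᵀ * P * B)⁻¹ * (Bᵀ * P * B * K₀)) := by
        simp only [Matrix.neg_mul, Matrix.mul_neg, neg_neg]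
    _ = (K₀ᵀ * (Bᵀ * (P * B))) * ((Bᵀ * P * B)⁻¹ * ((Bᵀ * P * B) * K₀)) := by
        simp only [Matrix.mul_assoc]
    _ = (K₀ᵀ * (Bᵀ * (P * B))) * K₀ := by
        rw [Matrix.nonsing_inv_mul_cancel_left _ _ hGdet]
    _ = K₀ᵀ * Bᵀ * P * B * K₀ := by simp only [Matrix.mul_assoc]
  have F1 : Aᵀ * P * A = P + K₀ᵀ * Bᵀ * P * B * K₀ - Q := by
    calc Aᵀ * P * A
        = (Aᵀ * P * A - Aᵀ * P * B * (Bᵀ * P * B)⁻¹ * Bᵀ * P * A + Q)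
          + K₀ᵀ * Bᵀ * P * B * K₀ - Q := by rw [hmid]; abel
    _ = P + K₀ᵀ * Bᵀ * P * B * K₀ - Q := by rw [← hric]
  -- complexify
  have hXc : matC Aᵀ * matC P * matC A
      = matC P + matC (K₀ᵀ * Bᵀ * P * B * K₀) - matC Q := by
    rw [← matC_mul, ← matC_mul, F1, matC_sub, matC_add]
  have hXYc : matC Aᵀ * matC P * matC (B * K₀) = -matC (K₀ᵀ * Bᵀ * P * B * K₀) := by
    rw [← matC_mul, ← matC_mul, F2, matC_neg]
  have hYXc : matC (B * K₀)ᵀ * matC P * matC A = -matC (K₀ᵀ * Bᵀ * P * B * K₀) := by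
    rw [← matC_mul, ← matC_mul, F3, matC_neg]
  have hYYc : matC (B * K₀)ᵀ * matC P * matC (B * K₀) = matC (K₀ᵀ * Bᵀ * P * B * K₀) := by
    rw [← matC_mul, ← matC_mul, F4]
  have expand : ∀ (X' Y' Pc X Y : Matrix (Fin n) (Fin n) ℂ) (s t : ℂ),
      (X' + s • Y') * Pc * (X + t • Y) =
        X' * Pc * X + t • (X' * Pc * Y) + s • (Y' * Pc * X) + (s * t) • (Y' * Pc * Y) := by
    intros X' Y' Pc X Y s t
    simp only [add_mul, mul_add, smul_mul_assoc, mul_smul_comm, smul_smul]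
    module
  have hcℂ : ((Complex.normSq (μ - 1) : ℝ) : ℂ) = (μ - 1) * (star μ - 1) := by
    rw [← Complex.mul_conj]
    simp [Complex.star_def, map_sub]
  have hkey : matC P - (matC A + μ • matC (B * K₀))ᴴ * matC P * (matC A + μ • matC (B * K₀))
      = matC (Q - Complex.normSq (μ - 1) • (K₀ᵀ * Bᵀ * P * B * K₀)) := by
    rw [matC_sub, matC_smul]
    rw [conjTranspose_add, conjTranspose_smul, matC_conjTranspose, matC_conjTranspose]
    rw [expand, hXc, hXYc, hYXc, hYYc, hcℂ]
    module
  have hQcR : (Q - Complex.normSq (μ - 1) • (K₀ᵀ * Bᵀ * P * B * K₀)).PosDef :=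
    sub_smul_posDef hQ hRsym hc0 hθ hμ
  have hPosC := matC_posDef hQcR
  rw [← hkey] at hPosC
  refine ⟨hPosC, ?_⟩
  intro hP
  intro μ' hμ'
  set Ac := matC A + μ • matC (B * K₀) with hAc
  have hunit : ¬IsUnit ((algebraMap ℂ (Matrix (Fin n) (Fin n) ℂ)) μ' - Ac) :=
    spectrum.mem_iff.mp hμ'
  rw [Algebra.algebraMap_eq_smul_one, isUnit_iff_isUnit_det] at hunit
  have hdet0 : (μ' • (1 : Matrix (Fin n) (Fin n) ℂ) - Ac).det = 0 := by
    by_contra h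
    exact hunit (isUnit_iff_ne_zero.mpr h)
  obtain ⟨v, hv0, hveq⟩ := (Matrix.exists_mulVec_eq_zero_iff).mpr hdet0
  have hAv : Ac *ᵥ v = μ' • v := by
    rw [sub_mulVec, smul_mulVec, one_mulVec] at hveq
    exact (sub_eq_zero.mp hveq).symm
  have hq : 0 < star v ⬝ᵥ matC P *ᵥ v := (matC_posDef hP).dotProduct_mulVec_pos hv0
  have hD : 0 < star v ⬝ᵥ (matC P - Acᴴ * matC P * Ac) *ᵥ v := hPosC.dotProduct_mulVec_pos hv0
  have hterm : star v ⬝ᵥ (Acᴴ * matC P * Ac) *ᵥ v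
      = (Complex.normSq μ' : ℂ) * (star v ⬝ᵥ matC P *ᵥ v) := by
    have e1 : (Acᴴ * matC P * Ac) *ᵥ v = Acᴴ *ᵥ (matC P *ᵥ (Ac *ᵥ v)) := by
      rw [mulVec_mulVec, mulVec_mulVec]
    rw [e1, dotProduct_mulVec, ← star_mulVec, hAv, star_smul, mulVec_smul,
      smul_dotProduct, dotProduct_smul]
    rw [smul_eq_mul, smul_eq_mul, ← mul_assoc]
    congr 1
    rw [Complex.star_def]
    exact Complex.normSq_eq_conj_mul_self.symm
  have hsub : star v ⬝ᵥ (matC P - Acᴴ * matC P * Ac) *ᵥ v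
      = ((1 : ℂ) - (Complex.normSq μ' : ℂ)) * (star v ⬝ᵥ matC P *ᵥ v) := by
    rw [sub_mulVec, dotProduct_sub, hterm]
    ring
  rw [hsub] at hD
  rw [Complex.lt_def] at hD hq
  simp only [Complex.zero_re, Complex.zero_im] at hD hq
  have hre : (((1 : ℂ) - (Complex.normSq μ' : ℂ)) * (star v ⬝ᵥ matC P *ᵥ v)).re
      = (1 - Complex.normSq μ') * (star v ⬝ᵥ matC P *ᵥ v).re := by
    rw [Complex.mul_re]
    simp [← hq.2]
  rw [hre] at hD
  have ht : 0 < 1 - Complex.normSq μ' := by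
    by_contra h
    push_neg at h
    nlinarith [hD.1, hq.1]
  have hlt : Complex.normSq μ' < 1 := by linarith
  have habs : ‖μ'‖ ^ 2 = Complex.normSq μ' := by
    rw [Complex.sq_norm]
  nlinarith [norm_nonneg μ']
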